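/- Let N ∈ ℕ, f : ℝ → ℂ measurable, c ∈ ℂ, and s : Fin N → ℂ. Assume that for every permutation σ of Fin N the function x ↦ (∏_{i} f(x_i)) · (∏_{k<l} (x_l − x_k)) · ∏_{j} exp(c · x_{σ(j)} · s_j) is Bochner integrable on ℝ^N (with Lebesgue measure). Then ∫_{ℝ^N} (∏_i f(x_i)) · (∏_{k<l}(x_l − x_k)) · det_{1≤m,n≤N}( exp(c · x_m · s_n) ) dx = N! · ∫_{ℝ^N} (∏_i f(x_i) · exp(c · x_i · s_i)) · (∏_{k<l}(x_l − x_k)) dx. -/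

import Mathlib

noncomputable section

open Finset MeasureTheory

private lemma prod_pairs_eq {N : ℕ} (g : Fin N → Fin N → ℝ) :
    (∏ q ∈ Finset.univ.filter (fun q : Fin N × Fin N => q.1 < q.2), g q.1 q.2)
      = ∏ i, ∏ j ∈ Finset.Ioi i, g i j := by
  rw [Finset.prod_filter, ← Finset.univ_product_univ, Finset.prod_product]
  refine Finset.prod_congr rfl fun i _ => ?_
  rw [← Finset.prod_filter]
  congr 1
  ext j; simp

private lemma vand_perm {N : ℕ} (σ : Equiv.Perm (Fin N)) (x : Fin N → ℝ) :
    (∏ q ∈ Finset.univ.filter (fun q : Fin N × Fin N => q.1 < q.2),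
        (x (σ q.2) - x (σ q.1)))
      = ((Equiv.Perm.sign σ : ℤ) : ℝ) *
        ∏ q ∈ Finset.univ.filter (fun q : Fin N × Fin N => q.1 < q.2),
          (x q.2 - x q.1) := by
  rw [prod_pairs_eq (fun i j => x (σ j) - x (σ i)), prod_pairs_eq (fun i j => x j - x i),
    ← Matrix.det_vandermonde, ← Matrix.det_vandermonde]
  have h : Matrix.vandermonde (fun i => x (σ i)) = (Matrix.vandermonde x).submatrix σ id := by
    ext i j; simp [Matrix.vandermonde]
  rw [h, Matrix.det_permute]

/-- **Permutation-symmetry reduction of the HCIZ determinant integral.**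
If for every permutation `σ` the function
`x ↦ (∏_i f(x_i)) (∏_{k<l}(x_l − x_k)) ∏_j exp(c x_{σ(j)} s_j)` is integrable on `ℝ^N`,
then
`∫ (∏_i f(x_i)) (∏_{k<l}(x_l−x_k)) det(exp(c x_m s_n)) dx
  = N! ∫ (∏_i f(x_i) exp(c x_i s_i)) (∏_{k<l}(x_l−x_k)) dx`. -/
theorem det_integral_perm_symmetry (N : ℕ) (f : ℝ → ℂ) (hf : Measurable f)
    (c : ℂ) (s : Fin N → ℂ)
    (hint : ∀ σ : Equiv.Perm (Fin N),
      Integrable (fun x : Fin N → ℝ =>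
        (∏ i, f (x i)) *
          ((∏ q ∈ Finset.univ.filter (fun q : Fin N × Fin N => q.1 < q.2),
              (x q.2 - x q.1) : ℝ) : ℂ) *
          ∏ j, Complex.exp (c * ((x (σ j) : ℝ) : ℂ) * s j)) volume) :
    ∫ x : Fin N → ℝ,
        (∏ i, f (x i)) *
          ((∏ q ∈ Finset.univ.filter (fun q : Fin N × Fin N => q.1 < q.2),
              (x q.2 - x q.1) : ℝ) : ℂ) *
          Matrix.det (Matrix.of fun m n : Fin N =>
            Complex.exp (c * ((x m : ℝ) : ℂ) * s n)) =
      (N.factorial : ℂ) *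
        ∫ x : Fin N → ℝ,
          (∏ i, f (x i) * Complex.exp (c * ((x i : ℝ) : ℂ) * s i)) *
            ((∏ q ∈ Finset.univ.filter (fun q : Fin N × Fin N => q.1 < q.2),
                (x q.2 - x q.1) : ℝ) : ℂ) := by
  classical
  set G : Equiv.Perm (Fin N) → (Fin N → ℝ) → ℂ := fun σ x =>
    (∏ i, f (x i)) *
      ((∏ q ∈ Finset.univ.filter (fun q : Fin N × Fin N => q.1 < q.2),
          (x q.2 - x q.1) : ℝ) : ℂ) *
      ∏ j, Complex.exp (c * ((x (σ j) : ℝ) : ℂ) * s j) with hGdef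
  have hGint : ∀ σ : Equiv.Perm (Fin N), Integrable (G σ) volume := fun σ => hint σ
  -- Change of variables: `∫ G σ = sign σ • ∫ G 1`.
  have key : ∀ σ : Equiv.Perm (Fin N),
      ∫ x : Fin N → ℝ, G σ x = ((Equiv.Perm.sign σ : ℤ) : ℂ) * ∫ x : Fin N → ℝ, G 1 x := by
    intro σ
    have hmp := (volume_measurePreserving_piCongrLeft (fun _ : Fin N => ℝ)
      (σ⁻¹ : Equiv.Perm (Fin N))).symm
    rw [← hmp.integral_comp' (G σ)]
    have happ : ∀ (x : Fin N → ℝ),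
        ((MeasurableEquiv.piCongrLeft (fun _ : Fin N => ℝ)
          (σ⁻¹ : Equiv.Perm (Fin N))).symm x) = fun a => x (σ⁻¹ a) := by
      intro x; funext a
      rfl
    have hpt : ∀ x : Fin N → ℝ,
        G σ ((MeasurableEquiv.piCongrLeft (fun _ : Fin N => ℝ)
          (σ⁻¹ : Equiv.Perm (Fin N))).symm x)
          = ((Equiv.Perm.sign σ : ℤ) : ℂ) * G 1 x := by
      intro x
      rw [happ x, hGdef]
      simp only
      have h1 : (∏ i, f (x (σ⁻¹ i))) = ∏ i, f (x i) :=
        Equiv.prod_comp (σ⁻¹ : Equiv.Perm (Fin N)) (fun i => f (x i))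
      have h2 : (∏ q ∈ Finset.univ.filter (fun q : Fin N × Fin N => q.1 < q.2),
            (x (σ⁻¹ q.2) - x (σ⁻¹ q.1)))
          = ((Equiv.Perm.sign σ : ℤ) : ℝ) *
            ∏ q ∈ Finset.univ.filter (fun q : Fin N × Fin N => q.1 < q.2),
              (x q.2 - x q.1) := by
        rw [vand_perm σ⁻¹ x, Equiv.Perm.sign_inv]
      have h3 : ∀ j : Fin N, (σ⁻¹ : Equiv.Perm (Fin N)) (σ j) = j := fun j =>
        Equiv.symm_apply_apply σ j
      simp only [h3, h1, h2, Equiv.Perm.one_apply]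
      push_cast
      ring
    calc ∫ x : Fin N → ℝ,
          G σ ((MeasurableEquiv.piCongrLeft (fun _ : Fin N => ℝ)
            (σ⁻¹ : Equiv.Perm (Fin N))).symm x)
        = ∫ x : Fin N → ℝ, ((Equiv.Perm.sign σ : ℤ) : ℂ) * G 1 x := by
          exact integral_congr_ae (Filter.Eventually.of_forall hpt)
      _ = ((Equiv.Perm.sign σ : ℤ) : ℂ) * ∫ x : Fin N → ℝ, G 1 x :=
          integral_const_mul _ _
  -- expand the determinant pointwise
  have hdet : ∀ x : Fin N → ℝ,
      (∏ i, f (x i)) *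
        ((∏ q ∈ Finset.univ.filter (fun q : Fin N × Fin N => q.1 < q.2),
            (x q.2 - x q.1) : ℝ) : ℂ) *
        Matrix.det (Matrix.of fun m n : Fin N =>
          Complex.exp (c * ((x m : ℝ) : ℂ) * s n))
      = ∑ σ : Equiv.Perm (Fin N), ((Equiv.Perm.sign σ : ℤ) : ℂ) * G σ x := by
    intro x
    rw [Matrix.det_apply, Finset.mul_sum]
    refine Finset.sum_congr rfl fun σ _ => ?_
    rw [Units.smul_def, zsmul_eq_mul, hGdef]
    simp only [Matrix.of_apply]
    push_cast
    ring
  have hRHS : ∀ x : Fin N → ℝ,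
      (∏ i, f (x i) * Complex.exp (c * ((x i : ℝ) : ℂ) * s i)) *
        ((∏ q ∈ Finset.univ.filter (fun q : Fin N × Fin N => q.1 < q.2),
            (x q.2 - x q.1) : ℝ) : ℂ) = G 1 x := by
    intro x
    rw [hGdef]
    simp only [Equiv.Perm.one_apply, Finset.prod_mul_distrib]
    ring
  calc ∫ x : Fin N → ℝ,
        (∏ i, f (x i)) *
          ((∏ q ∈ Finset.univ.filter (fun q : Fin N × Fin N => q.1 < q.2),
              (x q.2 - x q.1) : ℝ) : ℂ) *
          Matrix.det (Matrix.of fun m n : Fin N =>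
            Complex.exp (c * ((x m : ℝ) : ℂ) * s n))
      = ∫ x : Fin N → ℝ, ∑ σ : Equiv.Perm (Fin N), ((Equiv.Perm.sign σ : ℤ) : ℂ) * G σ x :=
        integral_congr_ae (Filter.Eventually.of_forall hdet)
    _ = ∑ σ : Equiv.Perm (Fin N), ∫ x : Fin N → ℝ, ((Equiv.Perm.sign σ : ℤ) : ℂ) * G σ x :=
        integral_finset_sum _ (fun σ _ => (hGint σ).const_mul _)
    _ = ∑ σ : Equiv.Perm (Fin N), ((Equiv.Perm.sign σ : ℤ) : ℂ) * ∫ x : Fin N → ℝ, G σ x :=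
        Finset.sum_congr rfl (fun σ _ => integral_const_mul _ _)
    _ = ∑ σ : Equiv.Perm (Fin N), ∫ x : Fin N → ℝ, G 1 x := by
        refine Finset.sum_congr rfl (fun σ _ => ?_)
        rw [key σ, ← mul_assoc]
        have : ((Equiv.Perm.sign σ : ℤ) : ℂ) * ((Equiv.Perm.sign σ : ℤ) : ℂ) = 1 := by
          rcases Int.units_eq_one_or (Equiv.Perm.sign σ) with h | h <;> rw [h] <;> norm_num
        rw [this, one_mul]
    _ = (N.factorial : ℂ) * ∫ x : Fin N → ℝ, G 1 x := by
        rw [Finset.sum_const, Finset.card_univ, Fintype.card_perm, nsmul_eq_mul, Fintype.card_fin]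
    _ = (N.factorial : ℂ) *
        ∫ x : Fin N → ℝ,
          (∏ i, f (x i) * Complex.exp (c * ((x i : ℝ) : ℂ) * s i)) *
            ((∏ q ∈ Finset.univ.filter (fun q : Fin N × Fin N => q.1 < q.2),
                (x q.2 - x q.1) : ℝ) : ℂ) := by
        rw [integral_congr_ae (Filter.Eventually.of_forall hRHS)]
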